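/- If B is an n-dimensional ball (a finite regular CW-complex with subcomplex ∂B such that (B, ∂B) ≅ (Eⁿ, Sⁿ⁻¹)), then the relative cylinder J(B) = I_{∂B} B = (I × B)/(I × ∂B → ∂B) is a ball of dimension n + 1. -/

import Mathlib

/-!
STATEMENT 11: If `B` is an `n`-dimensional ball (a space with boundary `∂B` such
that `(B, ∂B) ≅ (Eⁿ, Sⁿ⁻¹)`), then the relative cylinder
`J(B) = I_{∂B} B = (I × B)/(I × {a} ∼ a for a ∈ ∂B)` is a ball of dimension `n+1`,
with boundary `B⁻ ∪ B⁺` (the two end copies of `B`).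
-/

open Metric

/-- The relation collapsing each interval `I × {a}` for `a` in the boundary. -/
def cylRel {B : Type} (bd : Set B) (p q : unitInterval × B) : Prop :=
  p = q ∨ (p.2 = q.2 ∧ p.2 ∈ bd)

/-- The relative cylinder `J(B) = I_{∂B} B` as a quotient space. -/
def JB {B : Type} [TopologicalSpace B] (bd : Set B) : Type := Quot (cylRel bd)

instance {B : Type} [TopologicalSpace B] (bd : Set B) : TopologicalSpace (JB bd) :=
  instTopologicalSpaceQuot

/-- The boundary of `J(B)`: the two end copies `B⁻ ∪ B⁺` of `B`. -/
def JBboundary {B : Type} [TopologicalSpace B] (bd : Set B) : Set (JB bd) :=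
  {q | ∃ x : B, q = Quot.mk (cylRel bd) ((0 : unitInterval), x) ∨
                q = Quot.mk (cylRel bd) ((1 : unitInterval), x)}

noncomputable def snocE {n : ℕ} (v : EuclideanSpace ℝ (Fin n)) (a : ℝ) :
    EuclideanSpace ℝ (Fin (n + 1)) :=
  (WithLp.equiv 2 _).symm (Fin.snoc ((WithLp.equiv 2 _) v) a)

noncomputable def initE {n : ℕ} (w : EuclideanSpace ℝ (Fin (n + 1))) :
    EuclideanSpace ℝ (Fin n) :=
  (WithLp.equiv 2 _).symm (fun i : Fin n => (WithLp.equiv 2 _) w i.castSucc)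

lemma snocE_castSucc {n : ℕ} (v : EuclideanSpace ℝ (Fin n)) (a : ℝ) (i : Fin n) :
    snocE v a i.castSucc = v i := by
  simp [snocE, Fin.snoc_castSucc]

lemma snocE_last {n : ℕ} (v : EuclideanSpace ℝ (Fin n)) (a : ℝ) :
    snocE v a (Fin.last n) = a := by
  simp [snocE]

lemma initE_apply {n : ℕ} (w : EuclideanSpace ℝ (Fin (n + 1))) (i : Fin n) :
    initE w i = w i.castSucc := rfl

lemma snocE_initE {n : ℕ} (w : EuclideanSpace ℝ (Fin (n + 1))) :
    snocE (initE w) (w (Fin.last n)) = w := by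
  ext i
  induction i using Fin.lastCases with
  | last => simpa using snocE_last _ _
  | cast i => rw [snocE_castSucc]; rfl

lemma snocE_norm_sq {n : ℕ} (v : EuclideanSpace ℝ (Fin n)) (a : ℝ) :
    ‖snocE v a‖ ^ 2 = ‖v‖ ^ 2 + a ^ 2 := by
  rw [EuclideanSpace.norm_eq, EuclideanSpace.norm_eq,
    Real.sq_sqrt (by positivity), Real.sq_sqrt (by positivity),
    Fin.sum_univ_castSucc]
  simp [snocE_castSucc, snocE_last, Real.norm_eq_abs, sq_abs]

lemma continuous_snocE {n : ℕ} :
    Continuous (fun p : EuclideanSpace ℝ (Fin n) × ℝ => snocE p.1 p.2) := by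
  apply (PiLp.continuous_toLp 2 (fun _ : Fin (n + 1) => ℝ)).comp
  apply continuous_pi
  intro i
  induction i using Fin.lastCases with
  | last => simpa [Fin.snoc_last] using continuous_snd
  | cast i =>
      simpa [Fin.snoc_castSucc, Function.comp_def] using
        ((PiLp.continuous_apply 2 _ i).comp continuous_fst)

set_option maxHeartbeats 1000000 in
theorem stmt_11 (n : ℕ) (B : Type) [TopologicalSpace B] (bd : Set B)
    (hB : ∃ e : B ≃ₜ (closedBall (0 : EuclideanSpace ℝ (Fin n)) 1),
      (fun x => (e x : EuclideanSpace ℝ (Fin n))) '' bd = sphere 0 1) :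
    ∃ e : JB bd ≃ₜ (closedBall (0 : EuclideanSpace ℝ (Fin (n + 1))) 1),
      (fun y => (e y : EuclideanSpace ℝ (Fin (n + 1)))) '' JBboundary bd = sphere 0 1 := by
  obtain ⟨e, he⟩ := hB
  set E := EuclideanSpace ℝ (Fin n)
  set E' := EuclideanSpace ℝ (Fin (n + 1))
  -- basic facts about e and bd
  have hnorm : ∀ x : B, ‖(e x : E)‖ ≤ 1 := fun x => by
    have := (e x).2
    rwa [mem_closedBall_zero_iff] at this
  have hbd1 : ∀ x : B, x ∈ bd → ‖(e x : E)‖ = 1 := fun x hx => by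
    have : (e x : E) ∈ sphere (0 : E) 1 := he ▸ Set.mem_image_of_mem _ hx
    rwa [mem_sphere_zero_iff_norm] at this
  have hbd2 : ∀ x : B, ‖(e x : E)‖ = 1 → x ∈ bd := fun x hx => by
    have hx' : (e x : E) ∈ sphere (0 : E) 1 := by rwa [mem_sphere_zero_iff_norm]
    rw [← he] at hx'
    obtain ⟨y, hy, hxy⟩ := hx'
    have : e y = e x := Subtype.ext hxy
    rwa [← e.injective this]
  -- the map
  set f : unitInterval × B → E' := fun p =>
    snocE (e p.2 : E) ((2 * (p.1 : ℝ) - 1) * Real.sqrt (1 - ‖(e p.2 : E)‖ ^ 2)) with hf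
  have hfnorm : ∀ p : unitInterval × B,
      ‖f p‖ ^ 2 = ‖(e p.2 : E)‖ ^ 2 +
        (2 * (p.1 : ℝ) - 1) ^ 2 * (1 - ‖(e p.2 : E)‖ ^ 2) := by
    intro p
    rw [hf]
    rw [snocE_norm_sq, mul_pow, Real.sq_sqrt (by nlinarith [hnorm p.2, norm_nonneg (e p.2 : E)])]
  have ht1 : ∀ t : unitInterval, (2 * (t : ℝ) - 1) ^ 2 ≤ 1 := fun t => by
    have h0 := t.2.1; have h1 := t.2.2; nlinarith
  have hmem : ∀ p : unitInterval × B, f p ∈ closedBall (0 : E') 1 := by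
    intro p
    rw [mem_closedBall_zero_iff]
    have h2 : ‖f p‖ ^ 2 ≤ 1 := by
      rw [hfnorm p]
      have := ht1 p.1
      have h3 : 1 - ‖(e p.2 : E)‖ ^ 2 ≥ 0 := by nlinarith [hnorm p.2, norm_nonneg (e p.2 : E)]
      nlinarith
    nlinarith [norm_nonneg (f p)]
  set g : unitInterval × B → closedBall (0 : E') 1 := fun p => ⟨f p, hmem p⟩ with hg
  have hresp : ∀ p q : unitInterval × B, cylRel bd p q → g p = g q := by
    rintro p q (rfl | ⟨hpq, hbdp⟩)
    · rfl
    · apply Subtype.ext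
      have hx : ‖(e p.2 : E)‖ = 1 := hbd1 _ hbdp
      simp only [hf, hg, hpq, hpq ▸ hx]
      norm_num
  set F : JB bd → closedBall (0 : E') 1 := Quot.lift g hresp with hF
  have hFmk0 : ∀ p : unitInterval × B, F (Quot.mk (cylRel bd) p) = g p := fun p => rfl
  have hFmk : ∀ p : unitInterval × B, (F (Quot.mk (cylRel bd) p) : E') = f p :=
    fun p => congrArg Subtype.val (hFmk0 p)
  -- continuity
  have hconte : Continuous fun p : unitInterval × B => (e p.2 : E) :=
    (continuous_subtype_val.comp e.continuous).comp continuous_snd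
  have hcontf : Continuous f := by
    have hc2 : Continuous fun p : unitInterval × B =>
        (2 * ((p.1 : ℝ)) - 1) * Real.sqrt (1 - ‖(e p.2 : E)‖ ^ 2) := by
      apply Continuous.mul
      · exact (continuous_const.mul (continuous_subtype_val.comp continuous_fst)).sub
          continuous_const
      · exact Real.continuous_sqrt.comp (continuous_const.sub ((hconte.norm).pow 2))
    exact continuous_snocE.comp (hconte.prodMk hc2)
  have hcontF : Continuous F := continuous_quot_lift _ (hcontf.subtype_mk _)
  -- injectivity
  have hinj : Function.Injective F := by
    intro q1 q2 h
    obtain ⟨p1, rfl⟩ := Quot.exists_rep q1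
    obtain ⟨p2, rfl⟩ := Quot.exists_rep q2
    have hfe : f p1 = f p2 := by
      rw [← hFmk p1, ← hFmk p2, h]
    have hv : (e p1.2 : E) = (e p2.2 : E) := by
      ext i
      have := congrArg (fun w : E' => w i.castSucc) hfe
      rwa [show (f p1) i.castSucc = (e p1.2 : E) i from snocE_castSucc _ _ i,
        show (f p2) i.castSucc = (e p2.2 : E) i from snocE_castSucc _ _ i] at this
    have hx : p1.2 = p2.2 := e.injective (Subtype.ext hv)
    have hlast : (2 * (p1.1 : ℝ) - 1) * Real.sqrt (1 - ‖(e p1.2 : E)‖ ^ 2)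
        = (2 * (p2.1 : ℝ) - 1) * Real.sqrt (1 - ‖(e p2.2 : E)‖ ^ 2) := by
      have := congrArg (fun w : E' => w (Fin.last n)) hfe
      rwa [show (f p1) (Fin.last n) = _ from snocE_last _ _,
        show (f p2) (Fin.last n) = _ from snocE_last _ _] at this
    rw [← hv] at hlast
    by_cases hs : ‖(e p1.2 : E)‖ = 1
    · have hb1 : p1.2 ∈ bd := hbd2 _ hs
      apply Quot.sound
      exact Or.inr ⟨hx, hb1⟩
    · have hlt : ‖(e p1.2 : E)‖ < 1 := lt_of_le_of_ne (hnorm p1.2) hs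
      have hpos : 0 < Real.sqrt (1 - ‖(e p1.2 : E)‖ ^ 2) := by
        apply Real.sqrt_pos.mpr
        nlinarith [norm_nonneg (e p1.2 : E)]
      have ht : (p1.1 : ℝ) = (p2.1 : ℝ) := by
        have := mul_right_cancel₀ (ne_of_gt hpos) hlast
        linarith
      have : p1 = p2 := Prod.ext (Subtype.ext ht) hx
      rw [this]
  -- a general preimage construction
  have hpre : ∀ w : E', ‖w‖ ≤ 1 → ∃ (t : ℝ) (htmem : t ∈ Set.Icc (0:ℝ) 1) (x : B),
      f (⟨t, htmem⟩, x) = w ∧ (‖w‖ = 1 → t = 0 ∨ t = 1) := by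
    intro w hw
    set v : E := initE w with hvdef
    set a : ℝ := w (Fin.last n) with hadef
    have hsum : ‖v‖ ^ 2 + a ^ 2 = ‖w‖ ^ 2 := by
      rw [← snocE_norm_sq v a, hvdef, hadef, snocE_initE]
    have hv1 : ‖v‖ ≤ 1 := by nlinarith [norm_nonneg v, norm_nonneg w, sq_nonneg a]
    have hvmem : v ∈ closedBall (0 : E) 1 := by rwa [mem_closedBall_zero_iff]
    set x : B := e.symm ⟨v, hvmem⟩ with hxdef
    have hex : (e x : E) = v := by rw [hxdef, Homeomorph.apply_symm_apply]
    set r : ℝ := Real.sqrt (1 - ‖v‖ ^ 2) with hrdef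
    have hr2 : r ^ 2 = 1 - ‖v‖ ^ 2 :=
      Real.sq_sqrt (by nlinarith [norm_nonneg v])
    have har : a ^ 2 ≤ r ^ 2 := by nlinarith [norm_nonneg w]
    have hkey : ∀ (t : ℝ) (htmem : t ∈ Set.Icc (0:ℝ) 1),
        (2 * t - 1) * r = a → f (⟨t, htmem⟩, x) = w := by
      intro t htmem hta
      rw [hf]
      simp only
      rw [hex, ← hrdef, hta, hadef, hvdef, snocE_initE]
    by_cases hr0 : r = 0
    · have ha0 : a = 0 := by nlinarith [sq_nonneg a]
      refine ⟨1, ⟨zero_le_one, le_refl 1⟩, x, hkey 1 _ (by rw [hr0, ha0]; ring), fun _ => Or.inr rfl⟩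
    · have hrpos : 0 < r := lt_of_le_of_ne (Real.sqrt_nonneg _) (Ne.symm hr0)
      have habs : -r ≤ a ∧ a ≤ r := by
        constructor <;> nlinarith
      set t : ℝ := (a / r + 1) / 2 with htdef
      have htmem : t ∈ Set.Icc (0:ℝ) 1 := by
        constructor
        · have : -1 ≤ a / r := by
            rw [le_div_iff₀ hrpos]; linarith [habs.1]
          rw [htdef]; linarith
        · have : a / r ≤ 1 := by
            rw [div_le_one hrpos]; exact habs.2
          rw [htdef]; linarith
      have hr0' : r ≠ 0 := ne_of_gt hrpos
      have hta : (2 * t - 1) * r = a := by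
        rw [htdef]; field_simp; ring
      refine ⟨t, htmem, x, hkey t htmem hta, ?_⟩
      intro hw1
      have ha2 : a ^ 2 = r ^ 2 := by nlinarith
      have : (a - r) * (a + r) = 0 := by nlinarith
      rcases mul_eq_zero.mp this with h | h
      · right
        have : a = r := by linarith
        rw [htdef, this]; field_simp; norm_num
      · left
        have : a = -r := by linarith
        rw [htdef, this]; field_simp; norm_num
  -- surjectivity
  have hsurj : Function.Surjective F := by
    rintro ⟨w, hw⟩
    rw [mem_closedBall_zero_iff] at hw
    obtain ⟨t, htmem, x, hfx, -⟩ := hpre w hw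
    refine ⟨Quot.mk _ (⟨t, htmem⟩, x), Subtype.ext ?_⟩
    rw [hFmk]
    exact hfx
  -- instances
  haveI : CompactSpace (closedBall (0 : E) 1) :=
    isCompact_iff_compactSpace.mp (isCompact_closedBall _ _)
  haveI : CompactSpace B := e.symm.compactSpace
  haveI : CompactSpace (JB bd) := Quot.compactSpace
  -- the homeomorphism
  set Eq : JB bd ≃ closedBall (0 : E') 1 := Equiv.ofBijective F ⟨hinj, hsurj⟩ with hEq
  have hcontEq : Continuous Eq := hcontF
  refine ⟨hcontEq.homeoOfEquivCompactToT2, ?_⟩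
  have hHF : ∀ q : JB bd, hcontEq.homeoOfEquivCompactToT2 q = F q := fun q => rfl
  have hHq : ∀ p : unitInterval × B,
      ((hcontEq.homeoOfEquivCompactToT2 (Quot.mk (cylRel bd) p) :
        closedBall (0 : E') 1) : E') = f p :=
    fun p => (congrArg Subtype.val (hHF _)).trans (hFmk p)
  have hnorm1 : ∀ (t : unitInterval) (x : B), ((t : ℝ) = 0 ∨ (t : ℝ) = 1) →
      ‖f (t, x)‖ = 1 := by
    intro t x ht
    have h2 : ‖f (t, x)‖ ^ 2 = 1 := by
      rw [hfnorm]
      rcases ht with h | h <;> rw [h] <;> ring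
    rw [← Real.sqrt_sq (norm_nonneg _), h2, Real.sqrt_one]
  ext z
  constructor
  · rintro ⟨q, ⟨x, hq | hq⟩, rfl⟩ <;> subst hq <;>
      simp only [hHq, mem_sphere_zero_iff_norm]
    · exact hnorm1 0 x (Or.inl rfl)
    · exact hnorm1 1 x (Or.inr rfl)
  · intro hz
    rw [mem_sphere_zero_iff_norm] at hz
    obtain ⟨t, htmem, x, hfx, hts⟩ := hpre z (le_of_eq hz)
    refine ⟨Quot.mk _ (⟨t, htmem⟩, x), ⟨x, ?_⟩, ?_⟩
    · rcases hts hz with h | h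
      · left; congr 1; exact Prod.ext (Subtype.ext h) rfl
      · right; congr 1; exact Prod.ext (Subtype.ext h) rfl
    · simp only [hHq]
      exact hfx
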